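/- Let f : ℝⁿ → ℝⁿ be Lipschitz with f(0) = 0, let D ⊆ ℝⁿ be an open set containing 0, and let V : ℝⁿ → ℝ be continuously differentiable with V(0) = 0, V(z) > 0 for all z ∈ D \ {0}, and ⟨∇V(z), f(z)⟩ < 0 for all z ∈ D \ {0}. Then the origin is an asymptotically stable equilibrium of ż = f(z): it is stable, and moreover there exists δ₀ > 0 such that every differentiable curve z : [0,∞) → ℝⁿ satisfying z'(t) = f(z(t)) for all t ≥ 0 and ‖z(0)‖ < δ₀ satisfies z(t) → 0 as t → ∞. -/

import Mathlib

open Metric Set Filter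

variable {n : ℕ}

local notation "E" => EuclideanSpace ℝ (Fin n)

lemma lyap_chain (V : E → ℝ) (hV : ContDiff ℝ 1 V)
    (z : ℝ → E) (w : E) (t : ℝ) (hz : HasDerivAt z w t) :
    HasDerivAt (fun s => V (z s)) (inner ℝ (gradient V (z t)) w : ℝ) t := by
  have h1 : HasGradientAt V (gradient V (z t)) (z t) :=
    (hV.differentiable one_ne_zero (z t)).hasGradientAt
  have h2 := h1.hasFDerivAt.comp_hasDerivAt t hz
  rw [← InnerProductSpace.toDual_apply_apply]
  exact h2

lemma lyap_antitone (f : E → E) (V : E → ℝ) (hV : ContDiff ℝ 1 V)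
    (z : ℝ → E) (hz : ∀ t, 0 ≤ t → HasDerivAt z (f (z t)) t)
    (s : Set ℝ) (hconv : Convex ℝ s) (hs : s ⊆ Set.Ici 0) (c : ℝ)
    (hle : ∀ t ∈ s, (inner ℝ (gradient V (z t)) (f (z t)) : ℝ) + c ≤ 0) :
    AntitoneOn (fun t => V (z t) + c * t) s := by
  have hd : ∀ t ∈ s, HasDerivAt (fun u => V (z u) + c * u)
      ((inner ℝ (gradient V (z t)) (f (z t)) : ℝ) + c) t := by
    intro t ht
    have hct : HasDerivAt (fun x : ℝ => c * x) c t := by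
      simpa using (hasDerivAt_id t).const_mul c
    exact (lyap_chain V hV z _ t (hz t (hs ht))).add hct
  apply antitoneOn_of_deriv_nonpos hconv
  · exact fun t ht => ((hd t ht).continuousAt).continuousWithinAt
  · exact fun t ht => ((hd t (interior_subset ht)).differentiableAt).differentiableWithinAt
  · intro t ht
    rw [(hd t (interior_subset ht)).deriv]
    exact hle t (interior_subset ht)

lemma lyap_nonpos (f : E → E) (hf0 : f 0 = 0) (D : Set E)
    (V : E → ℝ)
    (hVdot : ∀ z ∈ D, z ≠ 0 → (inner ℝ (gradient V z) (f z) : ℝ) < 0)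
    (x : E) (hx : x ∈ D) : (inner ℝ (gradient V x) (f x) : ℝ) ≤ 0 := by
  by_cases h : x = 0
  · subst h; simp [hf0]
  · exact (hVdot x hx h).le

/-- Key invariance lemma: solutions starting near the origin stay in the ball of radius `ε`. -/
lemma lyap_key (f : E → E) (hf0 : f 0 = 0)
    (D : Set E) (hD : IsOpen D) (h0D : (0 : E) ∈ D)
    (V : E → ℝ) (hV : ContDiff ℝ 1 V) (hV0 : V 0 = 0)
    (hVpos : ∀ z ∈ D, z ≠ 0 → 0 < V z)
    (hVdot : ∀ z ∈ D, z ≠ 0 → (inner ℝ (gradient V z) (f z) : ℝ) < 0)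
    (r : ℝ) (hr : 0 < r) (hrD : Metric.closedBall 0 r ⊆ D)
    (hn : n ≠ 0) (ε : ℝ) (hε : 0 < ε) (hεr : ε ≤ r) :
    ∃ δ, 0 < δ ∧ δ ≤ ε ∧ ∀ z : ℝ → E,
      (∀ t, 0 ≤ t → HasDerivAt z (f (z t)) t) →
      ‖z 0‖ < δ → ∀ t, 0 ≤ t → ‖z t‖ < ε := by
  have hsne : (Metric.sphere (0 : E) ε).Nonempty := by
    refine ⟨EuclideanSpace.single ⟨0, Nat.pos_of_ne_zero hn⟩ ε, ?_⟩
    simp [mem_sphere_iff_norm, EuclideanSpace.norm_single, abs_of_pos hε]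
  obtain ⟨x₀, hx₀, hmin⟩ :=
    (isCompact_sphere (0 : E) ε).exists_isMinOn hsne hV.continuous.continuousOn
  have hx₀n : ‖x₀‖ = ε := by simpa using hx₀
  have hx₀D : x₀ ∈ D := hrD (by simp [Metric.mem_closedBall, dist_zero_right, hx₀n, hεr])
  have hm : 0 < V x₀ := by
    refine hVpos x₀ hx₀D ?_
    intro h; rw [h, norm_zero] at hx₀n; exact absurd hx₀n.symm (ne_of_gt hε)
  set m := V x₀ with hmdef
  obtain ⟨δ', hδ', hδ'U⟩ := Metric.isOpen_iff.1 (isOpen_Iio.preimage hV.continuous) 0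
    (by simpa [Set.mem_preimage, hV0] using hm)
  refine ⟨min δ' ε, lt_min hδ' hε, min_le_right _ _, ?_⟩
  intro z hz hz0 t ht
  by_contra hcon
  push_neg at hcon
  set A : Set ℝ := Set.Ici (0 : ℝ) ∩ z ⁻¹' {x | ε ≤ ‖x‖} with hAdef
  have hAne : A.Nonempty := ⟨t, ht, hcon⟩
  have hzc : ContinuousOn z (Set.Ici 0) :=
    fun s hs => ((hz s hs).continuousAt).continuousWithinAt
  have hAclosed : IsClosed A :=
    hzc.preimage_isClosed_of_isClosed isClosed_Ici
      (isClosed_le continuous_const continuous_norm)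
  have hbdd : BddBelow A := ⟨0, fun s hs => hs.1⟩
  set t₀ := sInf A with ht₀def
  have ht₀A : t₀ ∈ A := hAclosed.csInf_mem hAne hbdd
  have ht₀0 : (0 : ℝ) ≤ t₀ := ht₀A.1
  have hεz0 : ‖z 0‖ < ε := lt_of_lt_of_le hz0 (min_le_right _ _)
  have ht₀pos : 0 < t₀ := by
    rcases eq_or_lt_of_le ht₀0 with h | h
    · exfalso; have := ht₀A.2; rw [← h] at this; exact absurd this (not_le.2 hεz0)
    · exact h
  have hlt : ∀ s, 0 ≤ s → s < t₀ → ‖z s‖ < ε := by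
    intro s hs hst
    by_contra h; push_neg at h
    exact absurd (csInf_le hbdd ⟨hs, h⟩) (not_le.2 hst)
  have ht₀ε : ‖z t₀‖ ≤ ε := by
    have hcont : ContinuousAt (fun s => ‖z s‖) t₀ := ((hz t₀ ht₀0).continuousAt).norm
    have htd : Filter.Tendsto (fun s => ‖z s‖) (nhdsWithin t₀ (Set.Iio t₀)) (nhds ‖z t₀‖) :=
      hcont.continuousWithinAt.tendsto
    refine le_of_tendsto htd ?_
    filter_upwards [Ioo_mem_nhdsLT_of_mem ⟨ht₀pos, le_refl t₀⟩] with s hs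
    exact (hlt s hs.1.le hs.2).le
  have hzD : ∀ s ∈ Set.Icc (0 : ℝ) t₀, z s ∈ D := by
    intro s hs
    apply hrD
    rw [Metric.mem_closedBall, dist_zero_right]
    rcases eq_or_lt_of_le hs.2 with h | h
    · rw [h]; exact le_trans ht₀ε hεr
    · exact le_trans (hlt s hs.1 h).le hεr
  have hanti := lyap_antitone f V hV z hz (Set.Icc 0 t₀) (convex_Icc _ _)
    Set.Icc_subset_Ici_self 0
    (fun s hs => by simpa using lyap_nonpos f hf0 D V hVdot (z s) (hzD s hs))
  have h1 : V (z t₀) ≤ V (z 0) := by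
    have := hanti (Set.left_mem_Icc.2 ht₀0) (Set.right_mem_Icc.2 ht₀0) ht₀0
    simpa using this
  have h2 : V (z 0) < m := by
    have : z 0 ∈ Metric.ball (0 : E) δ' := by
      rw [Metric.mem_ball, dist_zero_right]
      exact lt_of_lt_of_le hz0 (min_le_left _ _)
    exact hδ'U this
  have h3 : m ≤ V (z t₀) := by
    have hmem : z t₀ ∈ Metric.sphere (0 : E) ε := by
      rw [mem_sphere_iff_norm, sub_zero]
      exact le_antisymm ht₀ε ht₀A.2
    exact hmin hmem
  linarith

theorem stmt_1 {n : ℕ}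
    (f : EuclideanSpace ℝ (Fin n) → EuclideanSpace ℝ (Fin n))
    (K : NNReal) (hf : LipschitzWith K f) (hf0 : f 0 = 0)
    (D : Set (EuclideanSpace ℝ (Fin n))) (hD : IsOpen D)
    (h0D : (0 : EuclideanSpace ℝ (Fin n)) ∈ D)
    (V : EuclideanSpace ℝ (Fin n) → ℝ) (hV : ContDiff ℝ 1 V)
    (hV0 : V 0 = 0)
    (hVpos : ∀ z ∈ D, z ≠ 0 → 0 < V z)
    (hVdot : ∀ z ∈ D, z ≠ 0 → (inner ℝ (gradient V z) (f z) : ℝ) < 0) :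
    (∀ ε > 0, ∃ δ > 0, ∀ z : ℝ → EuclideanSpace ℝ (Fin n),
        (∀ t, 0 ≤ t → HasDerivAt z (f (z t)) t) →
        ‖z 0‖ < δ → ∀ t, 0 ≤ t → ‖z t‖ < ε) ∧
      ∃ δ₀ > 0, ∀ z : ℝ → EuclideanSpace ℝ (Fin n),
        (∀ t, 0 ≤ t → HasDerivAt z (f (z t)) t) →
        ‖z 0‖ < δ₀ → Filter.Tendsto z Filter.atTop (nhds 0) := by
  classical
  by_cases hn : n = 0
  · subst hn
    haveI : Subsingleton (EuclideanSpace ℝ (Fin 0)) := by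
      exact ⟨fun a b => PiLp.ext fun i => i.elim0⟩
    constructor
    · intro ε hε
      refine ⟨1, one_pos, fun z _ _ t _ => ?_⟩
      rw [Subsingleton.elim (z t) 0, norm_zero]; exact hε
    · refine ⟨1, one_pos, fun z _ _ => ?_⟩
      have : z = fun _ => 0 := funext fun t => Subsingleton.elim _ _
      rw [this]; exact tendsto_const_nhds
  -- get a closed ball inside D
  obtain ⟨r, hr, hrD⟩ : ∃ r > 0, Metric.closedBall (0 : EuclideanSpace ℝ (Fin n)) r ⊆ D := by
    obtain ⟨r', hr', hball⟩ := Metric.isOpen_iff.1 hD 0 h0D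
    exact ⟨r' / 2, half_pos hr', fun x hx =>
      hball (lt_of_le_of_lt (Metric.mem_closedBall.1 hx) (half_lt_self hr'))⟩
  constructor
  · -- stability
    intro ε hε
    obtain ⟨δ, hδ, _, hkey⟩ := lyap_key f hf0 D hD h0D V hV hV0 hVpos hVdot r hr hrD hn
      (min ε r) (lt_min hε hr) (min_le_right _ _)
    exact ⟨δ, hδ, fun z hz hz0 t ht =>
      lt_of_lt_of_le (hkey z hz hz0 t ht) (min_le_left _ _)⟩
  · -- asymptotic stability
    obtain ⟨δ₀, hδ₀, _, hkey⟩ := lyap_key f hf0 D hD h0D V hV hV0 hVpos hVdot r hr hrD hn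
      r hr le_rfl
    refine ⟨δ₀, hδ₀, fun z hz hz0 => ?_⟩
    have hball : ∀ t, 0 ≤ t → ‖z t‖ < r := hkey z hz hz0
    have hzD : ∀ t, 0 ≤ t → z t ∈ D := fun t ht => hrD (by
      rw [Metric.mem_closedBall, dist_zero_right]; exact (hball t ht).le)
    have hanti : AntitoneOn (fun t => V (z t)) (Set.Ici 0) := by
      have := lyap_antitone f V hV z hz (Set.Ici 0) (convex_Ici _) le_rfl 0
        (fun s hs => by simpa using lyap_nonpos f hf0 D V hVdot (z s) (hzD s hs))
      simpa using this
    have hnonneg : ∀ t, 0 ≤ t → 0 ≤ V (z t) := by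
      intro t ht
      by_cases h : z t = 0
      · rw [h, hV0]
      · exact (hVpos (z t) (hzD t ht) h).le
    -- the Lyapunov function eventually gets below any positive level
    have claim : ∀ m' > 0, ∃ t, 0 ≤ t ∧ V (z t) < m' := by
      intro m' hm'
      by_contra hcl
      push_neg at hcl
      obtain ⟨ρ, hρ, hρU⟩ := Metric.isOpen_iff.1 (isOpen_Iio.preimage hV.continuous) 0
        (by simpa [Set.mem_preimage, hV0] using hm')
      have hρz : ∀ t, 0 ≤ t → ρ ≤ ‖z t‖ := by
        intro t ht
        by_contra h; push_neg at h
        have : V (z t) < m' := hρU (by rwa [Metric.mem_ball, dist_zero_right])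
        exact absurd (hcl t ht) (not_le.2 this)
      set Aset : Set (EuclideanSpace ℝ (Fin n)) :=
        Metric.closedBall 0 r \ Metric.ball 0 ρ with hAdef
      have hAc : IsCompact Aset := (isCompact_closedBall _ _).diff Metric.isOpen_ball
      have hAne : Aset.Nonempty := by
        refine ⟨z 0, ?_, ?_⟩
        · rw [Metric.mem_closedBall, dist_zero_right]; exact (hball 0 le_rfl).le
        · rw [Metric.mem_ball, dist_zero_right, not_lt]; exact hρz 0 le_rfl
      have hWcont : Continuous (fun x => (inner ℝ (gradient V x) (f x) : ℝ)) := by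
        have hgrad : Continuous (fun x : EuclideanSpace ℝ (Fin n) => gradient V x) := by
          simp only [gradient]
          exact ((InnerProductSpace.toDual ℝ _).symm.continuous.comp
            (hV.continuous_fderiv one_ne_zero))
        exact hgrad.inner hf.continuous
      obtain ⟨y₀, hy₀, hmax⟩ := hAc.exists_isMaxOn hAne hWcont.continuousOn
      have hy₀D : y₀ ∈ D := hrD hy₀.1
      have hy₀0 : y₀ ≠ 0 := by
        intro h
        have := hy₀.2
        rw [h] at this
        exact this (Metric.mem_ball_self hρ)
      set k : ℝ := -(inner ℝ (gradient V y₀) (f y₀) : ℝ) with hkdef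
      have hk : 0 < k := by
        have := hVdot y₀ hy₀D hy₀0; linarith
      have hWle : ∀ t, 0 ≤ t → (inner ℝ (gradient V (z t)) (f (z t)) : ℝ) + k ≤ 0 := by
        intro t ht
        have hmem : z t ∈ Aset := by
          refine ⟨?_, ?_⟩
          · rw [Metric.mem_closedBall, dist_zero_right]; exact (hball t ht).le
          · rw [Metric.mem_ball, dist_zero_right, not_lt]; exact hρz t ht
        have hle : (inner ℝ (gradient V (z t)) (f (z t)) : ℝ) ≤
            (inner ℝ (gradient V y₀) (f y₀) : ℝ) := hmax hmem
        simp only [hkdef]; linarith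
      have hantik := lyap_antitone f V hV z hz (Set.Ici 0) (convex_Ici _) le_rfl k
        (fun s hs => hWle s hs)
      obtain ⟨T, hTdef⟩ : ∃ T : ℝ, T = V (z 0) / k + 1 := ⟨_, rfl⟩
      have hT0 : (0 : ℝ) ≤ T := by
        have h1 : 0 ≤ V (z 0) / k := div_nonneg (hnonneg 0 le_rfl) hk.le
        rw [hTdef]; linarith
      have hmono := hantik (Set.mem_Ici.2 le_rfl) (Set.mem_Ici.2 hT0) hT0
      simp only [mul_zero, add_zero] at hmono
      have hkT : k * T = V (z 0) + k := by
        rw [hTdef]; field_simp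
      have hVT : 0 ≤ V (z T) := hnonneg T hT0
      rw [hkT] at hmono
      linarith
    -- conclude the limit
    rw [show (nhds (0 : EuclideanSpace ℝ (Fin n))) = nhds 0 from rfl]
    rw [NormedAddCommGroup.tendsto_nhds_zero]
    intro ε hε
    by_cases hA : ∃ x : EuclideanSpace ℝ (Fin n), ε ≤ ‖x‖ ∧ ‖x‖ ≤ r
    · set Bset : Set (EuclideanSpace ℝ (Fin n)) :=
        Metric.closedBall 0 r \ Metric.ball 0 ε with hBdef
      have hBc : IsCompact Bset := (isCompact_closedBall _ _).diff Metric.isOpen_ball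
      have hBne : Bset.Nonempty := by
        obtain ⟨x, hx1, hx2⟩ := hA
        exact ⟨x, by rw [Metric.mem_closedBall, dist_zero_right]; exact hx2,
          by rw [Metric.mem_ball, dist_zero_right, not_lt]; exact hx1⟩
      obtain ⟨y₁, hy₁, hminB⟩ := hBc.exists_isMinOn hBne hV.continuous.continuousOn
      have hm' : 0 < V y₁ := by
        refine hVpos y₁ (hrD hy₁.1) ?_
        intro h
        have := hy₁.2
        rw [h] at this
        exact this (Metric.mem_ball_self hε)
      obtain ⟨t₁, ht₁, hVt₁⟩ := claim (V y₁) hm'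
      rw [Filter.eventually_atTop]
      refine ⟨t₁, fun t ht => ?_⟩
      have ht0 : (0 : ℝ) ≤ t := le_trans ht₁ ht
      by_contra h; push_neg at h
      have hmem : z t ∈ Bset := by
        refine ⟨?_, ?_⟩
        · rw [Metric.mem_closedBall, dist_zero_right]; exact (hball t ht0).le
        · rw [Metric.mem_ball, dist_zero_right, not_lt]; exact h
      have h1 : V y₁ ≤ V (z t) := hminB hmem
      have h2 : V (z t) ≤ V (z t₁) := hanti (Set.mem_Ici.2 ht₁) (Set.mem_Ici.2 ht0) ht
      linarith
    · push_neg at hA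
      rw [Filter.eventually_atTop]
      refine ⟨0, fun t ht => ?_⟩
      by_contra h; push_neg at h
      exact absurd ((hball t ht).le) (not_le.2 (hA (z t) h))
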